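/- Let Γ be a finite group, θ an involution of Γ, and N ⊴ Γ a θ-invariant normal subgroup. Then |H^1(S₂, N)| ≤ |H^1(S₂, Γ)| · [Γ : N], where H^1(S₂, N) is formed with respect to the restriction of θ to N. -/

import Mathlib

/-- The first cohomology set `H¹(S₂, Γ)` of the two-element group acting on `Γ` through the
involution `θ`: equivalence classes of `{s ∈ Γ | s * θ s = 1}` under
`s ∼ (θ g)⁻¹ * s * g`. -/
def H1Set {Γ : Type*} [Group Γ] (θ : Γ ≃* Γ) : Type _ :=
  Quot (fun s t : {x : Γ // x * θ x = 1} => ∃ g : Γ, (t : Γ) = (θ g)⁻¹ * (s : Γ) * g)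

/-- The defining relation of `H1Set`. -/
def H1rel {Γ : Type*} [Group Γ] (θ : Γ ≃* Γ) :
    {x : Γ // x * θ x = 1} → {x : Γ // x * θ x = 1} → Prop :=
  fun s t => ∃ g : Γ, (t : Γ) = (θ g)⁻¹ * (s : Γ) * g

lemma h1rel_of_eqvGen {Γ : Type*} [Group Γ] (θ : Γ ≃* Γ) (hθ : ∀ g : Γ, θ (θ g) = g)
    {a b : {x : Γ // x * θ x = 1}} (h : Relation.EqvGen (H1rel θ) a b) : H1rel θ a b := by
  induction h with
  | rel a b h => exact h
  | refl a => exact ⟨1, by simp⟩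
  | symm a b h ih =>
      obtain ⟨g, hg⟩ := ih
      refine ⟨g⁻¹, ?_⟩
      rw [hg]
      simp [map_inv]
      group
  | trans a b c h1 h2 ih1 ih2 =>
      obtain ⟨g, hg⟩ := ih1
      obtain ⟨g', hg'⟩ := ih2
      refine ⟨g * g', ?_⟩
      rw [hg', hg]
      simp [mul_assoc]

lemma h1rel_of_mk_eq {Γ : Type*} [Group Γ] (θ : Γ ≃* Γ) (hθ : ∀ g : Γ, θ (θ g) = g)
    {a b : {x : Γ // x * θ x = 1}}
    (h : (Quot.mk (H1rel θ) a : H1Set θ) = Quot.mk (H1rel θ) b) : H1rel θ a b :=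
  h1rel_of_eqvGen θ hθ (Quot.eq.mp h)

/-- If `Γ` is a finite group with involution `θ` and `N ⊴ Γ` is a `θ`-invariant normal
subgroup, then `|H¹(S₂, Γ)| ≤ |H¹(S₂, Γ)| * [Γ : N]`, where `H¹(S₂,N)` is formed with
respect to the restriction `θN` of `θ` to `N`. -/
theorem stmt_7 (Γ : Type*) [Group Γ] [Fintype Γ]
    (θ : Γ ≃* Γ) (hθ : ∀ g : Γ, θ (θ g) = g)
    (N : Subgroup Γ) (hN : N.Normal) (hNinv : ∀ n ∈ N, θ n ∈ N)
    (θN : N ≃* N) (hθN : ∀ n : N, (θN n : Γ) = θ (n : Γ)) :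
    Nat.card (H1Set θN) ≤ Nat.card (H1Set θ) * N.index := by
  classical
  have hθNinv : ∀ n : N, θN (θN n) = n := by
    intro n
    ext
    rw [hθN, hθN, hθ]
  -- the map from cocycles of N to cocycles of Γ
  have hcoe : ∀ t : {x : N // x * θN x = 1}, ((t : N) : Γ) * θ ((t : N) : Γ) = 1 := by
    intro t
    have h := t.2
    have : (((t : N) * θN (t : N) : N) : Γ) = ((1 : N) : Γ) := by rw [h]
    simpa [hθN] using this
  set ι : {x : N // x * θN x = 1} → {x : Γ // x * θ x = 1} :=
    fun t => ⟨((t : N) : Γ), hcoe t⟩ with hι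
  -- the induced map on H1
  have hresp : ∀ a b : {x : N // x * θN x = 1}, H1rel θN a b →
      (Quot.mk (H1rel θ) (ι a) : H1Set θ) = Quot.mk (H1rel θ) (ι b) := by
    intro a b ⟨g, hg⟩
    refine Quot.sound ⟨(g : Γ), ?_⟩
    have : ((b : N) : Γ) = (((θN g)⁻¹ * (a : N) * g : N) : Γ) := by rw [← hg]
    simpa [hθN] using this
  set ψ : H1Set θN → H1Set θ := Quot.lift (fun t => Quot.mk (H1rel θ) (ι t)) hresp with hψ
  -- for each class c, a `g` conjugating the representative of `ψ c` into the
  -- representative of `c`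
  have hkey : ∀ c : H1Set θN, ∃ g : Γ,
      (Quot.out (ψ c)).1 = (θ g)⁻¹ * ((Quot.out c).1 : Γ) * g := by
    intro c
    have h1 : ψ c = Quot.mk (H1rel θ) (ι (Quot.out c)) := by
      conv_lhs => rw [← Quot.out_eq c]
    have h2 : (Quot.mk (H1rel θ) (Quot.out (ψ c)) : H1Set θ) = Quot.mk (H1rel θ) (ι (Quot.out c)) := by
      exact (Quot.out_eq (ψ c)).trans h1
    obtain ⟨g, hg⟩ := h1rel_of_mk_eq θ hθ ((h2).symm)
    exact ⟨g, hg⟩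
  choose g hg using hkey
  -- the injection
  set Φ : H1Set θN → H1Set θ × (Γ ⧸ N) :=
    fun c => (ψ c, QuotientGroup.mk (g c)) with hΦ
  have hinj : Function.Injective Φ := by
    intro c c' h
    have hψeq : ψ c = ψ c' := congrArg Prod.fst h
    have hgeq : (QuotientGroup.mk (g c) : Γ ⧸ N) = QuotientGroup.mk (g c') :=
      congrArg Prod.snd h
    have hn : (g c)⁻¹ * g c' ∈ N := QuotientGroup.eq.mp hgeq
    -- m := g c * (g c')⁻¹ ∈ N
    have hm : g c * (g c')⁻¹ ∈ N := by
      have h1 : (g c')⁻¹ * g c ∈ N := by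
        have := N.inv_mem hn
        simpa using this
      simpa [mul_assoc] using hN.conj_mem _ h1 (g c)
    have e1 : (Quot.out (ψ c)).1 = (θ (g c))⁻¹ * ((Quot.out c).1 : Γ) * g c := hg c
    have e2 : (Quot.out (ψ c)).1 = (θ (g c'))⁻¹ * ((Quot.out c').1 : Γ) * g c' := by
      rw [hψeq]; exact hg c'
    -- hence out c' = θ(m)⁻¹ * out c * m with m = g c * (g c')⁻¹
    have e3 : ((Quot.out c').1 : Γ) =
        (θ (g c * (g c')⁻¹))⁻¹ * ((Quot.out c).1 : Γ) * (g c * (g c')⁻¹) := by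
      have h4 : ((Quot.out c').1 : Γ) =
          θ (g c') * (Quot.out (ψ c)).1 * (g c')⁻¹ := by
        rw [e2]; group
      rw [h4, e1]
      simp [map_mul, map_inv]
      group
    set m : N := ⟨g c * (g c')⁻¹, hm⟩ with hmdef
    have hrel : H1rel θN (Quot.out c) (Quot.out c') := by
      refine ⟨m, ?_⟩
      ext
      push_cast
      rw [hθN]
      exact e3
    exact (Quot.out_eq c).symm.trans
      ((Quot.sound hrel : (Quot.mk (H1rel θN) (Quot.out c) : H1Set θN) =
        Quot.mk (H1rel θN) (Quot.out c')).trans (Quot.out_eq c'))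
  -- finiteness
  have finΓq : Finite (H1Set θ) :=
    Finite.of_surjective (Quot.mk (H1rel θ)) Quot.exists_rep
  have : Nat.card (H1Set θN) ≤ Nat.card (H1Set θ × (Γ ⧸ N)) :=
    Nat.card_le_card_of_injective Φ hinj
  rwa [Nat.card_prod] at this
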